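/- For rho = 1/2, the density of ones after n iterations of one-dimensional rule 130 equals c_n = 1/6 + (1/3) 4^{-n}; equivalently, 2^{-3-2(n-1)} (card of (n-1)-step preimages of 111 plus card of (n-1)-step preimages of 001) = 1/6 + (1/3)4^{-n} for n >= 1. -/

import Mathlib

/-- Local rule of elementary CA 130: f(x,y,z)=1 iff (x,y,z)=(0,0,1) or (1,1,1). -/
def f130 (x y z : Bool) : Bool := (!x && !y && z) || (x && y && z)

/-- Block evolution operator: maps a_0...a_{m-1} to the length m-2 string with
entries f(a_i,a_{i+1},a_{i+2}). -/
def bstep (a : List Bool) : List Bool :=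
  (List.range (a.length - 2)).map
    (fun i => f130 (a.getD i false) (a.getD (i+1) false) (a.getD (i+2) false))

/-- n-step preimage set of a length-3 block b: binary strings of length 2n+3
mapped to b by n applications of the block evolution operator. -/
def preim (n : ℕ) (b : List Bool) : Set (List Bool) :=
  {a | a.length = 2*n+3 ∧ bstep^[n] a = b}

/-- structural version of bstep -/
def bstep' : List Bool → List Bool
  | x :: y :: z :: rest => f130 x y z :: bstep' (y :: z :: rest)
  | _ => []

lemma bstep_cons3 (x y z : Bool) (r : List Bool) :
    bstep (x :: y :: z :: r) = f130 x y z :: bstep (y :: z :: r) := by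
  have h1 : (x :: y :: z :: r).length - 2 = r.length + 1 := by simp
  have h2 : (y :: z :: r).length - 2 = r.length := by simp
  rw [bstep, bstep, h1, h2, List.range_succ_eq_map, List.map_cons, List.map_map]
  rfl

lemma bstep_eq : ∀ a : List Bool, bstep a = bstep' a
  | [] => rfl
  | [_] => rfl
  | [_, _] => rfl
  | x :: y :: z :: r => by
      rw [bstep_cons3, bstep_eq (y :: z :: r)]; rfl

lemma bstep'_length : ∀ a : List Bool, (bstep' a).length = a.length - 2
  | [] => rfl
  | [_] => rfl
  | [_, _] => rfl
  | _ :: y :: z :: r => by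
      rw [bstep']
      simp [bstep'_length (y :: z :: r)]
lemma bstep'_cons2 (x : Bool) (t : List Bool) (h : 2 ≤ t.length) :
    bstep' (x :: t) = f130 x (t.getD 0 false) (t.getD 1 false) :: bstep' t := by
  rcases t with _ | ⟨y, _ | ⟨z, r⟩⟩ <;> simp_all [bstep']

lemma bstep'_replicate : ∀ m, bstep' (List.replicate (m+2) true) = List.replicate m true
  | 0 => rfl
  | m + 1 => by
      have h : List.replicate (m+1+2) true = true :: true :: true :: List.replicate m true := rfl
      have h2 : List.replicate (m+2) true = true :: true :: List.replicate m true := rfl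
      rw [h, bstep', ← h2, bstep'_replicate m]
      rfl

lemma repl_force : ∀ m, 2 ≤ m → ∀ l : List Bool, l.length = m + 2 →
    bstep' l = List.replicate m true → l = List.replicate (m+2) true := by
  intro m hm
  induction m, hm using Nat.le_induction with
  | base =>
      intro l hl hb
      rcases l with _ | ⟨a, _ | ⟨b, _ | ⟨c, _ | ⟨d, _ | ⟨e, t⟩⟩⟩⟩⟩ <;> simp_all
      revert hb; revert a b c d; decide
  | succ m hm ih =>
      intro l hl hb
      rcases l with _ | ⟨x, t⟩
      · simp at hl
      have ht : 2 ≤ t.length := by simp at hl; omega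
      rw [bstep'_cons2 x t ht] at hb
      have hrep : List.replicate (m+1) true = true :: List.replicate m true := rfl
      rw [hrep] at hb
      have h1 : f130 x (t.getD 0 false) (t.getD 1 false) = true := (List.cons.injEq _ _ _ _ ▸ hb).1
      have h2 : bstep' t = List.replicate m true := (List.cons.injEq _ _ _ _ ▸ hb).2
      have htl : t.length = m + 2 := by simp at hl; omega
      have : t = List.replicate (m+2) true := ih t htl h2
      subst this
      have hg0 : (List.replicate (m+2) true).getD 0 false = true := rfl
      have hg1 : (List.replicate (m+2) true).getD 1 false = true := by
        have : List.replicate (m+2) true = true :: true :: List.replicate m true := rfl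
        rw [this]; rfl
      rw [hg0, hg1] at h1
      have hx : x = true := by revert h1; cases x <;> decide
      subst hx
      rfl
/-- the forced suffix -/
def tl (k : ℕ) : List Bool := decide (k % 2 = 1) :: false :: List.replicate (2*k+1) true

lemma tl_length (k : ℕ) : (tl k).length = 2*k + 3 := by simp [tl]

lemma zero_repl_force (m : ℕ) (hm : 2 ≤ m) (l : List Bool) (hl : l.length = m + 3)
    (hb : bstep' l = false :: List.replicate m true) :
    l = false :: List.replicate (m+2) true := by
  rcases l with _ | ⟨d, r⟩
  · simp at hl
  have hr : 2 ≤ r.length := by simp at hl; omega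
  rw [bstep'_cons2 d r hr] at hb
  have h1 : f130 d (r.getD 0 false) (r.getD 1 false) = false := (List.cons.injEq _ _ _ _ ▸ hb).1
  have h2 : bstep' r = List.replicate m true := (List.cons.injEq _ _ _ _ ▸ hb).2
  have hrl : r.length = m + 2 := by simp at hl; omega
  have : r = List.replicate (m+2) true := repl_force m hm r hrl h2
  subst this
  have hg0 : (List.replicate (m+2) true).getD 0 false = true := rfl
  have hg1 : (List.replicate (m+2) true).getD 1 false = true := by
    have : List.replicate (m+2) true = true :: true :: List.replicate m true := rfl
    rw [this]; rfl
  rw [hg0, hg1] at h1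
  have hd : d = false := by revert h1; cases d <;> decide
  subst hd
  rfl

lemma parity_flip (k : ℕ) : (!decide ((k+1) % 2 = 1)) = decide (k % 2 = 1) := by
  rcases Nat.mod_two_eq_zero_or_one k with h | h <;> simp [Nat.add_mod, h]

lemma tl_force0 (l : List Bool) (hl : l.length = 5) (hb : bstep' l = tl 0) :
    l = tl 1 ∨ ∃ a b : Bool, l = a :: b :: tl 0 := by
  rcases l with _ | ⟨a, _ | ⟨b, _ | ⟨c, _ | ⟨d, _ | ⟨e, _ | ⟨x, t⟩⟩⟩⟩⟩⟩ <;> simp_all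
  revert hb
  show bstep' [a,b,c,d,e] = tl 0 → _
  revert a b c d e; decide

lemma tl_force (j : ℕ) (l : List Bool) (hl : l.length = 2*(j+1) + 5)
    (hb : bstep' l = tl (j+1)) : l = tl (j+2) := by
  rcases l with _ | ⟨v, t⟩
  · simp at hl
  have ht : 2 ≤ t.length := by simp at hl; omega
  rw [bstep'_cons2 v t ht] at hb
  have hb1 : f130 v (t.getD 0 false) (t.getD 1 false) = decide ((j+1) % 2 = 1) :=
    (List.cons.injEq _ _ _ _ ▸ hb).1
  have hb2 : bstep' t = false :: List.replicate (2*j+3) true := by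
    have h := (List.cons.injEq _ _ _ _ ▸ hb).2
    rw [h]
    show (tl (j+1)).tail = _
    simp only [tl, List.tail_cons]
    rw [show 2*(j+1)+1 = 2*j+3 from by ring]
  have htl : t.length = (2*j+3) + 3 := by simp at hl; omega
  have ht' : t = false :: List.replicate (2*j+5) true := by
    have := zero_repl_force (2*j+3) (by omega) t htl hb2
    rw [this, show 2*j+3+2 = 2*j+5 from by ring]
  subst ht'
  have hg0 : (false :: List.replicate (2*j+5) true).getD 0 false = false := rfl
  have hg1 : (false :: List.replicate (2*j+5) true).getD 1 false = true := by
    rw [show List.replicate (2*j+5) true = true :: List.replicate (2*j+4) true from rfl]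
    rfl
  rw [hg0, hg1] at hb1
  have hv : v = !decide ((j+1) % 2 = 1) := by
    revert hb1; cases v <;> simp [f130]
  have hpar : (!decide ((j+1) % 2 = 1)) = decide ((j+2) % 2 = 1) := by
    rcases Nat.mod_two_eq_zero_or_one j with h | h <;>
      simp [Nat.add_mod, h]
  rw [hv, hpar]
  show _ = tl (j+2)
  simp only [tl]
  rw [show 2*(j+2)+1 = 2*j+5 from by ring]
lemma bstep'_tl (k : ℕ) : bstep' (tl (k+1)) = tl k := by
  have h : tl (k+1) = decide ((k+1) % 2 = 1) :: false :: true :: true :: List.replicate (2*k+1) true := by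
    simp only [tl]
    rw [show 2*(k+1)+1 = (2*k+1)+2 from by ring]
    rfl
  rw [h, bstep', bstep']
  have h2 : bstep' (true :: true :: List.replicate (2*k+1) true) = List.replicate (2*k+1) true := by
    have : true :: true :: List.replicate (2*k+1) true = List.replicate ((2*k+1)+2) true := rfl
    rw [this, bstep'_replicate]
  rw [h2]
  have hf1 : f130 (decide ((k+1) % 2 = 1)) false true = !decide ((k+1) % 2 = 1) := by
    cases h : decide ((k+1) % 2 = 1) <;> rfl
  have hf2 : f130 false true true = false := rfl
  rw [hf1, hf2, parity_flip]
  rfl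

lemma bwd1 : ∀ (w : List Bool) (k : ℕ), ∃ w' : List Bool,
    w'.length = w.length ∧ bstep' (w ++ tl (k+1)) = w' ++ tl k := by
  intro w
  induction w with
  | nil => intro k; exact ⟨[], rfl, by simpa using bstep'_tl k⟩
  | cons c w ih =>
      intro k
      obtain ⟨w', hlen, hstep⟩ := ih k
      have hlen2 : 2 ≤ (w ++ tl (k+1)).length := by
        simp [tl_length]; omega
      refine ⟨f130 c ((w ++ tl (k+1)).getD 0 false) ((w ++ tl (k+1)).getD 1 false) :: w',
        by simp [hlen], ?_⟩
      rw [List.cons_append, bstep'_cons2 _ _ hlen2, hstep]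
      rfl

lemma bwd0 : ∀ (w : List Bool) (c1 c2 : Bool), ∃ w' : List Bool,
    w'.length = w.length ∧ bstep' (c1 :: c2 :: (w ++ tl 0)) = w' ++ tl 0 := by
  intro w
  induction w with
  | nil =>
      intro c1 c2
      refine ⟨[], rfl, ?_⟩
      show bstep' [c1, c2, false, false, true] = tl 0
      cases c1 <;> cases c2 <;> decide
  | cons d w ih =>
      intro c1 c2
      obtain ⟨w', hlen, hstep⟩ := ih c2 d
      refine ⟨f130 c1 c2 d :: w', by simp [hlen], ?_⟩
      rw [show c1 :: c2 :: ((d :: w) ++ tl 0) = c1 :: c2 :: d :: (w ++ tl 0) from rfl,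
        bstep', hstep]
      rfl

lemma fwd_gen : ∀ (w : List Bool) (l : List Bool) (k : ℕ),
    bstep' l = w ++ tl k → l.length = w.length + (2*k + 5) →
    ∃ j w', j ≤ k + 1 ∧ l = w' ++ tl j := by
  intro w
  induction w with
  | nil =>
      intro l k hb hl
      simp at hb hl
      match k with
      | 0 =>
          rcases tl_force0 l (by omega) hb with h | ⟨a, b, h⟩
          · exact ⟨1, [], by omega, h⟩
          · exact ⟨0, [a, b], by omega, h⟩
      | j + 1 =>
          exact ⟨j + 2, [], by omega, tl_force j l (by omega) hb⟩
  | cons c w ih =>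
      intro l k hb hl
      rcases l with _ | ⟨x, t⟩
      · simp at hl
      have ht : 2 ≤ t.length := by simp at hl; omega
      rw [bstep'_cons2 x t ht] at hb
      have hb2 : bstep' t = w ++ tl k := (List.cons.injEq _ _ _ _ ▸ hb).2
      obtain ⟨j, w', hj, hw⟩ := ih t k hb2 (by simp at hl ⊢; omega)
      exact ⟨j, x :: w', hj, by rw [hw]; rfl⟩
lemma preim_true : ∀ n, preim n [true, true, true] = {List.replicate (2*n+3) true} := by
  intro n
  induction n with
  | zero =>
      ext a
      simp only [preim, Set.mem_setOf_eq, Function.iterate_zero, id_eq, Set.mem_singleton_iff]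
      constructor
      · rintro ⟨-, rfl⟩; rfl
      · rintro rfl; exact ⟨rfl, rfl⟩
  | succ n ih =>
      ext a
      simp only [preim, Set.mem_setOf_eq, Function.iterate_succ_apply, Set.mem_singleton_iff]
      constructor
      · rintro ⟨hlen, hb⟩
        have hlb : (bstep a).length = 2*n+3 := by
          rw [bstep_eq, bstep'_length, hlen]; omega
        have : bstep a ∈ preim n [true, true, true] := ⟨hlb, hb⟩
        rw [ih, Set.mem_singleton_iff] at this
        have := repl_force (2*n+3) (by omega) a (by omega) (by rw [← bstep_eq]; exact this)
        rw [this]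
        congr 1
      · rintro rfl
        refine ⟨by simp, ?_⟩
        have h1 : List.replicate (2*(n+1)+3) true = List.replicate ((2*n+3)+2) true := by
          congr 1
        have h2 : bstep (List.replicate (2*(n+1)+3) true) = List.replicate (2*n+3) true := by
          rw [h1, bstep_eq, bstep'_replicate]
        rw [h2]
        have : List.replicate (2*n+3) true ∈ preim n [true, true, true] := by
          rw [ih]; rfl
        exact this.2

lemma preim_001 : ∀ n, preim n [false, false, true] =
    {a | ∃ k w, k ≤ n ∧ (w : List Bool).length = 2*(n-k) ∧ a = w ++ tl k} := by
  intro n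
  induction n with
  | zero =>
      ext a
      simp only [preim, Set.mem_setOf_eq, Function.iterate_zero, id_eq]
      constructor
      · rintro ⟨-, rfl⟩
        exact ⟨0, [], le_refl 0, by simp, rfl⟩
      · rintro ⟨k, w, hk, hw, rfl⟩
        interval_cases k
        have : w = [] := List.length_eq_zero_iff.mp (by simpa using hw)
        subst this
        exact ⟨by simp [tl], rfl⟩
  | succ n ih =>
      ext a
      simp only [preim, Set.mem_setOf_eq, Function.iterate_succ_apply]
      constructor
      · rintro ⟨hlen, hb⟩
        have hlb : (bstep a).length = 2*n+3 := by
          rw [bstep_eq, bstep'_length, hlen]; omega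
        have hmem : bstep a ∈ preim n [false, false, true] := ⟨hlb, hb⟩
        rw [ih] at hmem
        obtain ⟨k, w, hk, hw, hbw⟩ := hmem
        rw [bstep_eq] at hbw
        obtain ⟨j, w', hj, rfl⟩ := fwd_gen w a k hbw (by omega)
        have hwl : w'.length = 2*((n+1) - j) := by
          have := hlen
          simp [tl_length] at this
          omega
        exact ⟨j, w', by omega, hwl, rfl⟩
      · rintro ⟨k, w, hk, hw, rfl⟩
        have hlen : (w ++ tl k).length = 2*(n+1)+3 := by
          simp [tl_length]; omega
        refine ⟨hlen, ?_⟩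
        have hmem : bstep (w ++ tl k) ∈ preim n [false, false, true] →
            bstep^[n] (bstep (w ++ tl k)) = [false, false, true] := fun h => h.2
        apply hmem
        rw [ih]
        match k with
        | j + 1 =>
            obtain ⟨w', hwl, hst⟩ := bwd1 w j
            refine ⟨j, w', by omega, by omega, ?_⟩
            rw [bstep_eq, hst]
        | 0 =>
            rcases w with _ | ⟨c1, _ | ⟨c2, w1⟩⟩
            · simp at hw
            · simp at hw; omega
            obtain ⟨w', hwl, hst⟩ := bwd0 w1 c1 c2
            refine ⟨0, w', by omega, by simp at hw ⊢; omega, ?_⟩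
            rw [bstep_eq, show (c1 :: c2 :: w1) ++ tl 0 = c1 :: c2 :: (w1 ++ tl 0) from rfl, hst]
lemma replicate_getD_true (m j : ℕ) (h : j < m) : (List.replicate m true).getD j false = true := by
  rw [List.getD_eq_getElem _ _ (by simpa using h)]
  simp

lemma tl_ne (k k' : ℕ) (w w' : List Bool) (hk : k < k') :
    w ++ tl k ≠ w' ++ tl k' := by
  intro heq
  have hlen : w.length + (2*k+3) = w'.length + (2*k'+3) := by
    have := congrArg List.length heq
    simpa [tl_length] using this
  have h1 : (w ++ tl k).getD (w.length + 1) false = false := by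
    rw [List.getD_append_right _ _ _ _ (by omega)]
    simp only [Nat.add_sub_cancel_left]
    rfl
  have h2 : (w' ++ tl k').getD (w.length + 1) false = true := by
    rw [List.getD_append_right _ _ _ _ (by omega)]
    have hd : w.length + 1 - w'.length = (2*(k'-k) - 1) + 2 := by omega
    rw [hd]
    show (List.replicate (2*k'+1) true).getD (2*(k'-k) - 1) false = true
    exact replicate_getD_true _ _ (by omega)
  rw [heq, h2] at h1
  exact absurd h1 (by decide)

/-- all bool lists of length m, as a Finset -/
def lenF (m : ℕ) : Finset (List Bool) :=
  Finset.image List.ofFn (Finset.univ : Finset (Fin m → Bool))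

lemma mem_lenF (m : ℕ) (a : List Bool) : a ∈ lenF m ↔ a.length = m := by
  simp only [lenF, Finset.mem_image, Finset.mem_univ, true_and]
  constructor
  · rintro ⟨f, rfl⟩; simp
  · rintro rfl; exact ⟨a.get, List.ofFn_get a⟩

lemma card_lenF (m : ℕ) : (lenF m).card = 2^m := by
  rw [lenF, Finset.card_image_of_injective _ List.ofFn_injective]
  simp

/-- the preimage set of 001 as a Finset -/
def CF (n : ℕ) : Finset (List Bool) :=
  (Finset.range (n+1)).biUnion (fun k => (lenF (2*(n-k))).image (· ++ tl k))

lemma preim_001_coe (n : ℕ) : preim n [false, false, true] = ↑(CF n) := by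
  rw [preim_001]
  ext a
  simp only [Set.mem_setOf_eq, CF, Finset.coe_biUnion, Finset.mem_coe, Finset.mem_biUnion,
    Finset.mem_range, Finset.mem_image, mem_lenF, Set.mem_iUnion]
  constructor
  · rintro ⟨k, w, hk, hw, rfl⟩
    exact ⟨k, by omega, w, hw, rfl⟩
  · rintro ⟨k, hk, w, hw, rfl⟩
    exact ⟨k, w, by omega, hw, rfl⟩

lemma card_CF (n : ℕ) : (CF n).card = ∑ k ∈ Finset.range (n+1), 4^(n-k) := by
  rw [CF, Finset.card_biUnion]
  · refine Finset.sum_congr rfl fun k _ => ?_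
    rw [Finset.card_image_of_injective _ (List.append_left_injective (tl k)), card_lenF,
      pow_mul]
    norm_num
  · intro k _ k' _ hne
    rw [Function.onFun, Finset.disjoint_left]
    rintro a ha ha'
    simp only [Finset.mem_image, mem_lenF] at ha ha'
    obtain ⟨w, -, rfl⟩ := ha
    obtain ⟨w', -, heq⟩ := ha'
    rcases lt_or_gt_of_ne hne with h | h
    · exact tl_ne k k' w w' h heq.symm
    · exact tl_ne k' k w' w h heq
theorem stmt11 (n : ℕ) (hn : 1 ≤ n) :
    (2:ℝ) ^ (-(3 + 2 * ((n:ℤ) - 1))) *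
      (((preim (n-1) [true, true, true]).ncard : ℝ) +
       ((preim (n-1) [false, false, true]).ncard : ℝ)) =
    1/6 + (1/3) * (4:ℝ) ^ (-(n:ℤ)) := by
  obtain ⟨m, rfl⟩ : ∃ m, n = m + 1 := ⟨n - 1, by omega⟩
  have hA : (preim (m+1-1) [true, true, true]).ncard = 1 := by
    rw [Nat.add_sub_cancel, preim_true]; exact Set.ncard_singleton _
  have hB : ((preim (m+1-1) [false, false, true]).ncard : ℝ) = ((4:ℝ)^(m+1) - 1) / 3 := by
    rw [Nat.add_sub_cancel, preim_001_coe, Set.ncard_coe_finset, card_CF]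
    push_cast
    rw [show (∑ j ∈ Finset.range (m+1), (4:ℝ)^(m - j)) =
        ∑ j ∈ Finset.range (m+1), (fun j => (4:ℝ)^j) (m + 1 - 1 - j) from
      Finset.sum_congr rfl fun j hj => by
        norm_num]
    rw [Finset.sum_range_reflect (fun j => (4:ℝ)^j) (m+1)]
    rw [geom_sum_eq (by norm_num : (4:ℝ) ≠ 1)]
    norm_num
  rw [hA, hB]
  have he : -(3 + 2 * (((m:ℤ)+1) - 1)) = -((2*m+3 : ℕ) : ℤ) := by push_cast; ring
  push_cast
  rw [he, zpow_neg, zpow_natCast, show -((m:ℤ)+1) = -(((m+1 : ℕ)) : ℤ) by push_cast; ring,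
    zpow_neg, zpow_natCast]
  have h4 : (4:ℝ)^(m+1) = 2^(2*(m+1)) := by
    rw [show (4:ℝ) = 2^2 by norm_num, ← pow_mul]
  rw [h4]
  have h2 : ∀ j : ℕ, (2:ℝ)^j ≠ 0 := fun j => by positivity
  field_simp
  ring
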